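/- Identify the tangent plane with span{e₁,e₂} in ℝ³ and n₀ = e₃. For a matrix X ∈ ℝ³ˣ³ whose columns 3 are zero (i.e. X = Σ_{i,α} X_{iα} eᵢ⊗e_α with α ∈ {1,2}), define the linear operator L(X) := X − (λ/(λ+2μ))(tr X)·n₀⊗n₀ − ((μ−μ_c)/(μ+μ_c))·(Xᵀn₀)⊗n₀ and the tensor map C(E) := 2μ·sym E + 2μ_c·skew E + λ(tr E)·I. Then ⟨X, C(L(X))⟩ = 2W_mp(X) − (λ²/(λ+2μ))(tr X)² − ((μ−μ_c)²/(μ+μ_c))‖Xᵀn₀‖², where W_mp(X) = μ‖sym X‖² + μ_c‖skew X‖² + (λ/2)(tr X)² and ⟨·,·⟩ is the Frobenius inner product. -/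
import Mathlib


open Matrix

noncomputable def finner (A B : Matrix (Fin 3) (Fin 3) ℝ) : ℝ := (A.transpose * B).trace

noncomputable def symM (X : Matrix (Fin 3) (Fin 3) ℝ) : Matrix (Fin 3) (Fin 3) ℝ :=
  ((1:ℝ)/2) • (X + X.transpose)

noncomputable def skewM (X : Matrix (Fin 3) (Fin 3) ℝ) : Matrix (Fin 3) (Fin 3) ℝ :=
  ((1:ℝ)/2) • (X - X.transpose)

/-- the normal vector n₀ = e₃ -/
noncomputable def n0 : Fin 3 → ℝ := fun i => if i = 2 then 1 else 0

/-- the operator `L_{n₀}` -/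
noncomputable def Lop (μ μc lam : ℝ) (X : Matrix (Fin 3) (Fin 3) ℝ) :
    Matrix (Fin 3) (Fin 3) ℝ :=
  X - (lam / (lam + 2 * μ)) • (X.trace • vecMulVec n0 n0)
    - ((μ - μc) / (μ + μc)) • vecMulVec (X.transpose *ᵥ n0) n0

/-- the constitutive map `C` -/
noncomputable def Cmap (μ μc lam : ℝ) (E : Matrix (Fin 3) (Fin 3) ℝ) :
    Matrix (Fin 3) (Fin 3) ℝ :=
  (2 * μ) • symM E + (2 * μc) • skewM E + (lam * E.trace) • (1 : Matrix (Fin 3) (Fin 3) ℝ)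

/-- `⟨X, C(L(X))⟩ = 2W_mp(X) − (λ²/(λ+2μ))(tr X)² − ((μ−μ_c)²/(μ+μ_c))‖Xᵀn₀‖²`
for matrices `X` with vanishing third column. -/
theorem inner_C_L (μ μc lam : ℝ) (h1 : lam + 2 * μ ≠ 0) (h2 : μ + μc ≠ 0)
    (X : Matrix (Fin 3) (Fin 3) ℝ) (hX : X *ᵥ n0 = 0) :
    finner X (Cmap μ μc lam (Lop μ μc lam X)) =
      2 * (μ * finner (symM X) (symM X) + μc * finner (skewM X) (skewM X)
            + (lam / 2) * X.trace ^ 2)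
        - (lam ^ 2 / (lam + 2 * μ)) * X.trace ^ 2
        - ((μ - μc) ^ 2 / (μ + μc)) * ((X.transpose *ᵥ n0) ⬝ᵥ (X.transpose *ᵥ n0)) := by
  have hc : ∀ i, X i 2 = 0 := by
    intro i
    have := congrFun hX i
    simpa [mulVec, dotProduct, n0, Fin.sum_univ_three] using this
  simp only [finner, Cmap, Lop, symM, skewM, n0, Matrix.trace, Matrix.diag,
    Matrix.mul_apply, Matrix.vecMulVec_apply, Matrix.mulVec, dotProduct,
    Fin.sum_univ_three, Matrix.transpose_apply, Matrix.add_apply, Matrix.sub_apply,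
    Matrix.smul_apply, Matrix.one_apply, smul_eq_mul]
  simp only [hc]
  have e1 : lam ^ 2 / (lam + 2 * μ) = lam * (lam / (lam + 2 * μ)) := by ring
  have e2 : (μ - μc) ^ 2 / (μ + μc) = (μ - μc) * ((μ - μc) / (μ + μc)) := by ring
  rw [e1, e2]
  simp only [Fin.isValue, show ((0:Fin 3) = 2) = False by simp, show ((1:Fin 3) = 2) = False by simp, show ((2:Fin 3) = 2) = True by simp, show ((1:Fin 3) = 0) = False by simp, show ((2:Fin 3) = 0) = False by simp, show ((0:Fin 3) = 1) = False by simp, show ((2:Fin 3) = 1) = False by simp, if_true, if_false]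
  ring
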